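/- Let n ≥ 2 and let P = {x ∈ ℝⁿ : x_n ≥ x₁² + ⋯ + x_{n−1}²} be the solid (unbounded) elliptic paraboloid, with section function A_P(ξ,t) defined as the (n−1)-dimensional Hausdorff measure of P ∩ {x : x·ξ = t}. Then there exist nonzero polynomials q ∈ ℝ[x₁,…,xₙ] and p ∈ ℝ[x₁,…,xₙ,t] such that q(ξ)·A_P(ξ,t)² + p(ξ,t) = 0 for all ξ ∈ S^{n−1} and all t ∈ ℝ with 0 < A_P(ξ,t) < ∞. -/

import Mathlib

open MeasureTheory

/-- The (possibly infinite) section function of a closed set `P`: the `(n-1)`-dimensional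
Hausdorff measure of the hyperplane cross-section `P ∩ {x · ξ = t}`. -/
noncomputable def secFunE {n : ℕ} (P : Set (EuclideanSpace ℝ (Fin n)))
    (ξ : EuclideanSpace ℝ (Fin n)) (t : ℝ) : ENNReal :=
  μH[((n : ℝ) - 1)] (P ∩ {x : EuclideanSpace ℝ (Fin n) | (inner ℝ x ξ : ℝ) = t})

/-- The solid elliptic paraboloid `{x : xₙ ≥ x₁² + ⋯ + x_{n-1}²}`. -/
def solidParaboloid (n : ℕ) (hn : 0 < n) : Set (EuclideanSpace ℝ (Fin n)) :=
  {x | ∑ j ∈ Finset.univ.filter (fun j : Fin n => (j : ℕ) < n - 1), x j ^ 2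
        ≤ x ⟨n - 1, Nat.sub_lt hn one_pos⟩}

namespace ParaboloidAux

open Set Metric

noncomputable section

variable {k : ℕ}

local notation "E" => EuclideanSpace ℝ (Fin (k+2))
local notation "E'" => EuclideanSpace ℝ (Fin (k+1))

lemma norm_sq_eq {j : ℕ} (x : EuclideanSpace ℝ (Fin j)) : ‖x‖^2 = ∑ i, x i ^2 := by
  rw [EuclideanSpace.norm_eq, Real.sq_sqrt (by positivity)]
  simp [sq_abs]

lemma memP (x : E) (h : 0 < k+2) :
    x ∈ solidParaboloid (k+2) h ↔
      ∑ j : Fin (k+1), x j.castSucc ^2 ≤ x (Fin.last (k+1)) := by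
  have h2 : ∑ j ∈ Finset.univ.filter (fun j : Fin (k+2) => (j : ℕ) < k+2-1), x j ^ 2
      = ∑ j : Fin (k+1), x j.castSucc ^2 := by
    rw [Finset.sum_filter, Fin.sum_univ_castSucc]
    simp [Fin.is_lt, Fin.is_le]
  rw [solidParaboloid, Set.mem_setOf_eq, h2]
  rfl

lemma memP' (x : E) (h : 0 < k+2) :
    x ∈ solidParaboloid (k+2) h ↔
      ‖x‖^2 - x (Fin.last (k+1)) ^2 ≤ x (Fin.last (k+1)) := by
  have hh : ∑ i : Fin (k+2), x i ^2 = ∑ j : Fin (k+1), x j.castSucc ^2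
      + x (Fin.last (k+1)) ^2 := Fin.sum_univ_castSucc _
  rw [memP x h, norm_sq_eq, hh]
  constructor <;> intro <;> linarith

lemma coord_eq_inner (x : E) (i : Fin (k+2)) :
    x i = (inner ℝ x (EuclideanSpace.single i (1:ℝ)) : ℝ) := by
  rw [EuclideanSpace.inner_single_right]
  simp

/-! ### Rotation reduction -/

lemma sec_rotate (d : ℝ) (hd : 0 ≤ d) (ξ : E) (hξ : ‖ξ‖ = 1) (t : ℝ) (h : 0 < k+2) :
    μH[d] (solidParaboloid (k+2) h ∩ {x : E | (inner ℝ x ξ : ℝ) = t}) =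
    μH[d] (solidParaboloid (k+2) h ∩ {x : E | (inner ℝ x
      ((EuclideanSpace.single (0 : Fin (k+2)) (Real.sqrt (1 - ξ (Fin.last (k+1)) ^2)))
        + EuclideanSpace.single (Fin.last (k+1)) (ξ (Fin.last (k+1)))) : ℝ) = t}) := by
  set c : ℝ := ξ (Fin.last (k+1)) with hc
  set s : ℝ := Real.sqrt (1 - c^2) with hs
  set ξ₀ : E := EuclideanSpace.single (0 : Fin (k+2)) s
      + EuclideanSpace.single (Fin.last (k+1)) c with hξ₀def
  have hN0 : (Fin.last (k+1) : Fin (k+2)) ≠ 0 := by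
    simp [Fin.ext_iff]
  have hc2 : c^2 ≤ 1 := by
    have h1 : c^2 ≤ ∑ i, ξ i ^2 :=
      Finset.single_le_sum (f := fun i => ξ i ^2) (fun i _ => sq_nonneg _) (Finset.mem_univ _)
    have h2 : ‖ξ‖^2 = 1 := by rw [hξ]; norm_num
    rw [norm_sq_eq] at h2; linarith
  have hs2 : s^2 = 1 - c^2 := Real.sq_sqrt (by linarith)
  have hξ₀0 : ξ₀ 0 = s := by
    simp [hξ₀def, EuclideanSpace.single_apply, hN0]
  have hξ₀N : ξ₀ (Fin.last (k+1)) = c := by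
    simp [hξ₀def, EuclideanSpace.single_apply, hN0]
  have hξ₀norm : ‖ξ₀‖ = 1 := by
    have : ‖ξ₀‖^2 = 1 := by
      rw [← real_inner_self_eq_norm_sq]
      rw [hξ₀def, inner_add_left, EuclideanSpace.inner_single_left,
        EuclideanSpace.inner_single_left]
      rw [← hξ₀def, hξ₀0, hξ₀N]
      simp only [conj_trivial]
      nlinarith [hs2]
    nlinarith [norm_nonneg ξ₀]
  set F := Submodule.reflection (ℝ ∙ (ξ - ξ₀))ᗮ with hF
  have hFξ : F ξ = ξ₀ := Submodule.reflection_sub (by rw [hξ, hξ₀norm])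
  have heN : F (EuclideanSpace.single (Fin.last (k+1)) (1:ℝ))
      = EuclideanSpace.single (Fin.last (k+1)) (1:ℝ) := by
    apply Submodule.reflection_mem_subspace_eq_self
    rw [Submodule.mem_orthogonal_singleton_iff_inner_right]
    rw [inner_sub_left, EuclideanSpace.inner_single_right, EuclideanSpace.inner_single_right]
    simp [← hc, hξ₀N]
  have hFN : ∀ y : E, (F y) (Fin.last (k+1)) = y (Fin.last (k+1)) := by
    intro y
    rw [coord_eq_inner (F y) (Fin.last (k+1)), coord_eq_inner y (Fin.last (k+1)), ← heN,
      LinearIsometryEquiv.inner_map_map, heN]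
  have hmem : ∀ w : E, F w ∈ solidParaboloid (k+2) h ∩ {x : E | (inner ℝ x ξ₀ : ℝ) = t}
      ↔ w ∈ solidParaboloid (k+2) h ∩ {x : E | (inner ℝ x ξ : ℝ) = t} := by
    intro w
    have h1 : F w ∈ solidParaboloid (k+2) h ↔ w ∈ solidParaboloid (k+2) h := by
      rw [memP' _ h, memP' _ h, hFN w, F.norm_map]
    have h2 : (inner ℝ (F w) ξ₀ : ℝ) = inner ℝ w ξ := by
      rw [← hFξ, LinearIsometryEquiv.inner_map_map]
    constructor
    · rintro ⟨hp, hh⟩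
      exact ⟨(h1.1 hp), by rw [Set.mem_setOf_eq, ← h2]; exact hh⟩
    · rintro ⟨hp, hh⟩
      exact ⟨h1.2 hp, by rw [Set.mem_setOf_eq, h2]; exact hh⟩
  have himg : (⇑F) '' (solidParaboloid (k+2) h ∩ {x : E | (inner ℝ x ξ : ℝ) = t})
      = solidParaboloid (k+2) h ∩ {x : E | (inner ℝ x ξ₀ : ℝ) = t} := by
    ext z
    constructor
    · rintro ⟨w, hw, rfl⟩
      exact (hmem w).2 hw
    · intro hz
      exact ⟨F.symm z, (hmem _).1 (by rwa [F.apply_symm_apply]), F.apply_symm_apply z⟩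
  rw [← himg, F.isometry.hausdorffMeasure_image (Or.inl hd)]

/-! ### Hausdorff measure vs volume -/

def cF (k : ℕ) : NNReal :=
  Measure.addHaarScalarFactor
    (μH[((Module.finrank ℝ (EuclideanSpace ℝ (Fin (k+1))) : ℕ):ℝ)]
      : Measure (EuclideanSpace ℝ (Fin (k+1)))) volume

set_option maxHeartbeats 1000000 in
lemma cF_smul : (μH[((k:ℝ)+1)] : Measure E') = cF k • volume := by
  have hfr : ((Module.finrank ℝ E' : ℕ) : ℝ) = (k:ℝ)+1 := by
    rw [finrank_euclideanSpace_fin]; push_cast; ring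
  have h2 : (μH[((Module.finrank ℝ E' : ℕ) : ℝ)] : Measure E')
      = Measure.addHaarScalarFactor (μH[((Module.finrank ℝ E' : ℕ) : ℝ)] : Measure E')
          volume • volume :=
    Measure.isAddLeftInvariant_eq_smul _ _
  rw [← hfr]
  exact h2

set_option maxHeartbeats 1000000 in
lemma cF_pos : 0 < cF k :=
  Measure.addHaarScalarFactor_pos_of_isAddHaarMeasure _ _

/-! ### The vertical (infinite) case -/

def consMap (k : ℕ) (t : ℝ) : EuclideanSpace ℝ (Fin (k+1)) → EuclideanSpace ℝ (Fin (k+2)) :=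
  fun y => WithLp.toLp 2 (Fin.cons t y.ofLp : Fin (k+2) → ℝ)

lemma cons_isometry (t : ℝ) : Isometry (consMap k t) := by
  apply Isometry.of_dist_eq
  intro y z
  rw [EuclideanSpace.dist_eq (consMap k t y) (consMap k t z), EuclideanSpace.dist_eq y z]
  congr 1
  rw [Fin.sum_univ_succ]
  simp [consMap, Fin.cons_zero, Fin.cons_succ]

lemma vertical_sec_infinite (t : ℝ) (h : 0 < k+2) :
    μH[((k:ℝ)+1)] (solidParaboloid (k+2) h ∩ {x : E | x 0 = t}) = ⊤ := by
  classical
  set W : Set E' := {y : E' | t^2 + ∑ i : Fin k, y i.castSucc ^2 ≤ y (Fin.last k)} with hW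
  set ι : E' → E := consMap k t with hι
  have himg : ι '' W = solidParaboloid (k+2) h ∩ {x : E | x 0 = t} := by
    have key : ∀ y : E', (ι y ∈ solidParaboloid (k+2) h ∩ {x : E | x 0 = t}) ↔ y ∈ W := by
      intro y
      have h0 : (ι y) 0 = t := rfl
      have hsum : ∑ j : Fin (k+1), (ι y) j.castSucc ^2
          = t^2 + ∑ i : Fin k, y i.castSucc ^2 := by
        rw [Fin.sum_univ_succ]
        congr 1
      have hlast : (ι y) (Fin.last (k+1)) = y (Fin.last k) := by
        rw [← Fin.succ_last]
        rfl
      rw [Set.mem_inter_iff, memP _ h, hsum, hlast, Set.mem_setOf_eq, h0]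
      exact ⟨fun hh => hh.1, fun hh => ⟨hh, rfl⟩⟩
    ext x
    constructor
    · rintro ⟨y, hy, rfl⟩
      exact (key y).2 hy
    · rintro ⟨hp, hx0⟩
      simp only [Set.mem_setOf_eq] at hx0
      have hx : ι (WithLp.toLp 2 (Fin.tail x)) = x := by
        rw [hι]
        show WithLp.toLp 2 (Fin.cons t (Fin.tail x.ofLp) : Fin (k+2) → ℝ) = x
        rw [← hx0]
        exact congrArg (WithLp.toLp 2) (Fin.cons_self_tail x.ofLp)
      exact ⟨WithLp.toLp 2 (Fin.tail x), (key _).1 (by rw [hx]; exact ⟨hp, hx0⟩), hx⟩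
  have hWvol : (volume : Measure E') W = ⊤ := by
    set J : Fin (k+1) → Set ℝ := fun i => if i = Fin.last k then Ici ((t^2 + k : ℝ)) else Icc 0 1
      with hJ
    have hsub : (WithLp.ofLp ⁻¹' Set.univ.pi J : Set E') ⊆ W := by
      intro y hy
      have hlast : (t^2 + (k:ℝ)) ≤ y (Fin.last k) := by
        have := hy (Fin.last k) (Set.mem_univ _)
        simpa [hJ] using this
      have hbound : ∑ i : Fin k, y i.castSucc ^2 ≤ (k:ℝ) := by
        have : ∀ i : Fin k, y i.castSucc ^2 ≤ 1 := by
          intro i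
          have hi := hy i.castSucc (Set.mem_univ _)
          have hne : i.castSucc ≠ Fin.last k := (Fin.castSucc_lt_last i).ne
          rw [hJ] at hi
          simp only [hne, if_false, Set.mem_Icc] at hi
          nlinarith [hi.1, hi.2]
        calc ∑ i : Fin k, y i.castSucc ^2 ≤ ∑ _i : Fin k, (1:ℝ) :=
              Finset.sum_le_sum fun i _ => this i
          _ = (k:ℝ) := by simp
      exact le_trans (by linarith) hlast
    have hpivol : (volume : Measure E') (WithLp.ofLp ⁻¹' Set.univ.pi J) = ⊤ := by
      have hmp := PiLp.volume_preserving_ofLp (Fin (k+1))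
      have hmeas : MeasurableSet (Set.univ.pi J) := by
        apply MeasurableSet.univ_pi
        intro i
        rw [hJ]
        dsimp only
        split_ifs
        · exact measurableSet_Ici
        · exact measurableSet_Icc
      have := hmp.measure_preimage hmeas.nullMeasurableSet
      rw [this, volume_pi_pi]
      rw [Fin.prod_univ_castSucc]
      have h1 : ∀ i : Fin k, (volume : Measure ℝ) (J i.castSucc) = 1 := by
        intro i
        rw [hJ]
        simp only [(Fin.castSucc_lt_last i).ne, if_false]
        rw [Real.volume_Icc]
        norm_num
      have h2 : (volume : Measure ℝ) (J (Fin.last k)) = ⊤ := by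
        rw [hJ]; simp only [if_pos rfl]; exact Real.volume_Ici
      rw [h2, Finset.prod_congr rfl (fun i _ => h1 i)]
      simp
    exact top_le_iff.1 (hpivol ▸ measure_mono hsub)
  have hisoeq := (cons_isometry (k := k) t).hausdorffMeasure_image
    (d := (k:ℝ)+1) (Or.inl (by positivity)) W
  rw [← himg]
  refine Eq.trans hisoeq ?_
  rw [cF_smul]
  simp only [Measure.smul_apply, hWvol]
  rw [ENNReal.smul_def, smul_eq_mul,
    ENNReal.mul_top (by exact_mod_cast (cF_pos (k := k)).ne')]

/-! ### The slanted case -/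

def DMap (k : ℕ) (c : ℝ) : EuclideanSpace ℝ (Fin (k+1)) →ₗ[ℝ] EuclideanSpace ℝ (Fin (k+1)) where
  toFun y := WithLp.toLp 2 (fun i => if i = 0 then c⁻¹ * y i else y i : Fin (k+1) → ℝ)
  map_add' y z := by
    ext i
    by_cases hi : i = 0 <;> simp [hi, PiLp.add_apply] <;> ring
  map_smul' a y := by
    ext i
    by_cases hi : i = 0 <;> simp [hi, PiLp.smul_apply, smul_eq_mul] <;> ring

lemma DMap_det (c : ℝ) : LinearMap.det (DMap k c) = c⁻¹ := by
  classical
  set b := (EuclideanSpace.basisFun (Fin (k+1)) ℝ).toBasis with hb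
  rw [← LinearMap.det_toMatrix b]
  have : LinearMap.toMatrix b b (DMap k c)
      = Matrix.diagonal (fun i : Fin (k+1) => if i = 0 then c⁻¹ else 1) := by
    ext i j
    rw [LinearMap.toMatrix_apply]
    have hbj : b j = EuclideanSpace.single j (1:ℝ) := by
      rw [hb, OrthonormalBasis.coe_toBasis, EuclideanSpace.basisFun_apply]
    have hrepr : ∀ (x : EuclideanSpace ℝ (Fin (k+1))), b.repr x i = x i := by
      intro x
      rw [hb, OrthonormalBasis.coe_toBasis_repr_apply, EuclideanSpace.basisFun_repr]
    rw [hrepr, hbj]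
    show (if i = 0 then c⁻¹ * (EuclideanSpace.single j (1:ℝ)) i
        else (EuclideanSpace.single j (1:ℝ)) i) = _
    rw [Matrix.diagonal_apply, EuclideanSpace.single_apply]
    by_cases hij : i = j
    · subst hij
      by_cases hi : i = 0 <;> simp [hi]
    · by_cases hi : i = 0 <;> simp [hi, hij, Ne.symm hij]
  rw [this, Matrix.det_diagonal, Finset.prod_ite_eq' Finset.univ (0 : Fin (k+1))
    (fun _ => c⁻¹)]
  simp

def uMap (k : ℕ) (s c : ℝ) (hsc : s^2 + c^2 = 1) :
    EuclideanSpace ℝ (Fin (k+1)) →ₗᵢ[ℝ] EuclideanSpace ℝ (Fin (k+2)) where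
  toLinearMap :=
  { toFun := fun y => WithLp.toLp 2 (Fin.snoc (fun j : Fin (k+1) => if j = 0 then c * y 0 else y j)
      (-s * y 0) : Fin (k+2) → ℝ)
    map_add' := fun y z => by
      ext j
      refine Fin.lastCases ?_ (fun i => ?_) j
      · simp [Fin.snoc_last, PiLp.add_apply]; ring
      · simp only [Fin.snoc_castSucc, PiLp.add_apply]
        by_cases hi : i = 0 <;> simp [hi] <;> ring
    map_smul' := fun a y => by
      ext j
      refine Fin.lastCases ?_ (fun i => ?_) j
      · simp [Fin.snoc_last, PiLp.smul_apply, smul_eq_mul]; ring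
      · simp only [Fin.snoc_castSucc, PiLp.smul_apply, smul_eq_mul]
        by_cases hi : i = 0 <;> simp [hi, smul_eq_mul] <;> ring }
  norm_map' := by
    intro y
    set w : EuclideanSpace ℝ (Fin (k+2)) :=
      WithLp.toLp 2 (Fin.snoc (fun j : Fin (k+1) => if j = 0 then c * y 0 else y j)
        (-s * y 0) : Fin (k+2) → ℝ) with hw
    show ‖w‖ = ‖y‖
    have h2 : ‖w‖^2 = ‖y‖^2 := by
      rw [hw]
      rw [norm_sq_eq, norm_sq_eq]
      rw [Fin.sum_univ_castSucc]
      simp only [Fin.snoc_castSucc, Fin.snoc_last]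
      rw [Fin.sum_univ_succ, Fin.sum_univ_succ (f := fun i : Fin (k+1) => y i ^2)]
      simp only [if_pos rfl]
      have : ∀ i : Fin k, (if i.succ = 0 then c * y 0 else y i.succ)^2 = y i.succ ^2 := by
        intro i
        rw [if_neg (Fin.succ_ne_zero i)]
      rw [Finset.sum_congr rfl (fun i _ => this i)]
      simp only [if_true]
      nlinarith [hsc]
    have h3 := congrArg Real.sqrt h2
    rw [Real.sqrt_sq (norm_nonneg _), Real.sqrt_sq (norm_nonneg _)] at h3
    exact h3

def snocMap (k : ℕ) (s c t : ℝ) : EuclideanSpace ℝ (Fin (k+1)) → EuclideanSpace ℝ (Fin (k+2)) :=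
  fun y => WithLp.toLp 2 (Fin.snoc y.ofLp ((t - s * y 0)/c) : Fin (k+2) → ℝ)

lemma inner_single_pair (s c : ℝ) (x : E) :
    (inner ℝ x (EuclideanSpace.single (0 : Fin (k+2)) s
      + EuclideanSpace.single (Fin.last (k+1)) c) : ℝ) = s * x 0 + c * x (Fin.last (k+1)) := by
  rw [inner_add_right, EuclideanSpace.inner_single_right, EuclideanSpace.inner_single_right]
  simp

lemma sec_eq_image (s c t : ℝ) (hc : c ≠ 0) (h : 0 < k+2) :
    solidParaboloid (k+2) h ∩ {x : E | (inner ℝ x (EuclideanSpace.single (0:Fin (k+2)) s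
        + EuclideanSpace.single (Fin.last (k+1)) c) : ℝ) = t}
      = snocMap k s c t '' {y : EuclideanSpace ℝ (Fin (k+1)) | ‖y‖^2 + (s/c) * y 0 ≤ t/c} := by
  have hdiv : ∀ u : ℝ, (t - s * u)/c = t/c - (s/c) * u := by
    intro u; field_simp
  ext x
  simp only [Set.mem_inter_iff, memP _ h, Set.mem_setOf_eq, inner_single_pair, Set.mem_image]
  constructor
  · rintro ⟨hpar, hplane⟩
    set y : EuclideanSpace ℝ (Fin (k+1)) := WithLp.toLp 2 (Fin.init x : Fin (k+1) → ℝ) with hy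
    have hy0 : y 0 = x 0 := rfl
    have hlast : x (Fin.last (k+1)) = (t - s * x 0)/c := by
      rw [eq_div_iff hc]; linarith
    refine ⟨y, ?_, ?_⟩
    · show ‖y‖^2 + (s/c) * y 0 ≤ t/c
      have hny : ‖y‖^2 = ∑ j : Fin (k+1), x j.castSucc ^2 := by
        rw [norm_sq_eq]; rfl
      rw [hny, hy0]
      have := hlast ▸ hpar
      rw [hdiv] at this
      linarith
    · show WithLp.toLp 2 (Fin.snoc y.ofLp ((t - s * y 0)/c) : Fin (k+2) → ℝ) = x
      rw [hy0, ← hlast, hy]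
      exact congrArg (WithLp.toLp 2) (Fin.snoc_init_self x.ofLp)
  · rintro ⟨y, hyB, rfl⟩
    have hlast : (snocMap k s c t y) (Fin.last (k+1)) = (t - s * y 0)/c := by
      simp [snocMap, Fin.snoc_last]
    have hcast : ∀ j : Fin (k+1), (snocMap k s c t y) j.castSucc = y j := by
      intro j; simp [snocMap, Fin.snoc_castSucc]
    have h0 : (snocMap k s c t y) 0 = y 0 := by
      have := hcast 0
      rwa [Fin.castSucc_zero] at this
    constructor
    · rw [hlast, Finset.sum_congr rfl (fun j _ => by rw [hcast j]), hdiv]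
      have hny : ∑ j : Fin (k+1), y j ^2 = ‖y‖^2 := (norm_sq_eq y).symm
      rw [hny]
      exact (by linarith [hyB] : ‖y‖^2 ≤ t/c - s/c * y 0)
    · rw [h0, hlast]
      field_simp
      ring

lemma ballB_eq (s c t : ℝ) (hc : c ≠ 0) (hR : 0 ≤ t/c + s^2/(4*c^2)) :
    {y : EuclideanSpace ℝ (Fin (k+1)) | ‖y‖^2 + (s/c) * y 0 ≤ t/c}
      = closedBall (EuclideanSpace.single (0 : Fin (k+1)) (-s/(2*c)))
          (Real.sqrt (t/c + s^2/(4*c^2))) := by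
  ext y
  rw [Set.mem_setOf_eq, mem_closedBall, dist_eq_norm]
  have hexp : ‖y - EuclideanSpace.single (0 : Fin (k+1)) (-s/(2*c))‖^2
      = ‖y‖^2 + (s/c) * y 0 + s^2/(4*c^2) := by
    rw [norm_sub_sq_real, EuclideanSpace.inner_single_right, EuclideanSpace.norm_single]
    simp only [conj_trivial, Real.norm_eq_abs, sq_abs]
    field_simp
    ring
  rw [Real.le_sqrt (norm_nonneg _) hR, hexp]
  constructor <;> intro <;> linarith

lemma ball_empty (s c t : ℝ) (hc : c ≠ 0) (hR : t/c + s^2/(4*c^2) < 0) :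
    {y : EuclideanSpace ℝ (Fin (k+1)) | ‖y‖^2 + (s/c) * y 0 ≤ t/c} = ∅ := by
  ext y
  simp only [Set.mem_setOf_eq, Set.mem_empty_iff_false, iff_false]
  intro hy
  have hexp : ‖y - EuclideanSpace.single (0 : Fin (k+1)) (-s/(2*c))‖^2
      = ‖y‖^2 + (s/c) * y 0 + s^2/(4*c^2) := by
    rw [norm_sub_sq_real, EuclideanSpace.inner_single_right, EuclideanSpace.norm_single]
    simp only [conj_trivial, Real.norm_eq_abs, sq_abs]
    field_simp
    ring
  nlinarith [sq_nonneg ‖y - EuclideanSpace.single (0 : Fin (k+1)) (-s/(2*c))‖]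

def kap (k : ℕ) : ℝ :=
  ((cF k : ENNReal) * volume (ball (0 : EuclideanSpace ℝ (Fin (k+1))) 1)).toReal

lemma volball_pos : 0 < volume (ball (0 : EuclideanSpace ℝ (Fin (k+1))) 1) :=
  measure_ball_pos _ _ one_pos

lemma volball_lt_top : volume (ball (0 : EuclideanSpace ℝ (Fin (k+1))) 1) < ⊤ :=
  measure_ball_lt_top

lemma kapV_ne_top : (cF k : ENNReal) * volume (ball (0 : EuclideanSpace ℝ (Fin (k+1))) 1) ≠ ⊤ :=
  ENNReal.mul_ne_top ENNReal.coe_ne_top volball_lt_top.ne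

lemma kap_pos : 0 < kap k := by
  rw [kap, ENNReal.toReal_pos_iff]
  constructor
  · exact ENNReal.mul_pos (by exact_mod_cast (cF_pos (k := k)).ne') volball_pos.ne'
  · exact lt_of_le_of_ne le_top kapV_ne_top

lemma ofReal_kap : ENNReal.ofReal (kap k)
    = (cF k : ENNReal) * volume (ball (0 : EuclideanSpace ℝ (Fin (k+1))) 1) :=
  ENNReal.ofReal_toReal kapV_ne_top

lemma snoc_comp (s c t : ℝ) (hc : c ≠ 0) (hsc : s^2 + c^2 = 1) :
    snocMap k s c t = (fun x : EuclideanSpace ℝ (Fin (k+2)) =>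
        (EuclideanSpace.single (Fin.last (k+1)) (t/c) : EuclideanSpace ℝ (Fin (k+2))) + x)
      ∘ (uMap k s c hsc) ∘ (DMap k c) := by
  funext y
  show WithLp.toLp 2 (Fin.snoc y.ofLp ((t - s * y 0)/c) : Fin (k+2) → ℝ)
      = (EuclideanSpace.single (Fin.last (k+1)) (t/c) : EuclideanSpace ℝ (Fin (k+2)))
          + (uMap k s c hsc) ((DMap k c) y)
  ext j
  have hDy0 : ((DMap k c) y) 0 = c⁻¹ * y 0 := by simp [DMap]
  refine Fin.lastCases ?_ (fun i => ?_) j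
  · show Fin.snoc (α := fun _ => ℝ) y.ofLp ((t - s * y 0)/c) (Fin.last (k+1))
      = (EuclideanSpace.single (Fin.last (k+1)) (t/c) : EuclideanSpace ℝ (Fin (k+2)))
          (Fin.last (k+1)) + (uMap k s c hsc) ((DMap k c) y) (Fin.last (k+1))
    rw [Fin.snoc_last]
    have h1 : (uMap k s c hsc) ((DMap k c) y) (Fin.last (k+1))
        = -s * (((DMap k c) y) 0) := by
      show (Fin.snoc (α := fun _ => ℝ) _ (-s * ((DMap k c) y) 0)) (Fin.last (k+1)) = _
      rw [Fin.snoc_last]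
    rw [h1, hDy0, EuclideanSpace.single_apply, if_pos rfl]
    field_simp
    ring
  · show Fin.snoc (α := fun _ => ℝ) y.ofLp ((t - s * y 0)/c) i.castSucc
      = (EuclideanSpace.single (Fin.last (k+1)) (t/c) : EuclideanSpace ℝ (Fin (k+2)))
          i.castSucc + (uMap k s c hsc) ((DMap k c) y) i.castSucc
    rw [Fin.snoc_castSucc]
    have h1 : (uMap k s c hsc) ((DMap k c) y) i.castSucc
        = if i = 0 then c * (((DMap k c) y) 0) else ((DMap k c) y) i := by
      show (Fin.snoc (α := fun _ => ℝ)
        (fun j : Fin (k+1) => if j = 0 then c * ((DMap k c) y) 0 else ((DMap k c) y) j)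
          (-s * ((DMap k c) y) 0)) i.castSucc = _
      rw [Fin.snoc_castSucc]
    rw [h1, EuclideanSpace.single_apply,
      if_neg (by exact fun hh => (Fin.castSucc_lt_last i).ne hh)]
    by_cases hi : i = 0
    · subst hi
      rw [if_pos rfl, hDy0]
      field_simp
      ring
    · rw [if_neg hi]
      have : ((DMap k c) y) i = y i := by simp [DMap, hi]
      rw [this, zero_add]

set_option maxHeartbeats 1000000 in
lemma slant_measure (s c t : ℝ) (hc : 0 < c) (hsc : s^2 + c^2 = 1) (h : 0 < k+2)
    (hR : 0 ≤ t/c + s^2/(4*c^2)) :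
    μH[((k:ℝ)+1)] (solidParaboloid (k+2) h ∩ {x : E | (inner ℝ x
        (EuclideanSpace.single (0:Fin (k+2)) s
          + EuclideanSpace.single (Fin.last (k+1)) c) : ℝ) = t})
      = ENNReal.ofReal (c⁻¹ * Real.sqrt (t/c + s^2/(4*c^2)) ^ (k+1) * kap k) := by
  rw [sec_eq_image s c t hc.ne' h, ballB_eq s c t hc.ne' hR,
    snoc_comp s c t hc.ne' hsc, Set.image_comp, Set.image_comp]
  have htrans : Isometry (fun x : E =>
      (EuclideanSpace.single (Fin.last (k+1)) (t/c) : E) + x) :=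
    Isometry.of_dist_eq (fun a b => dist_add_left _ a b)
  rw [htrans.hausdorffMeasure_image (Or.inl (by positivity))]
  rw [(uMap k s c hsc).isometry.hausdorffMeasure_image (Or.inl (by positivity))]
  rw [cF_smul]
  rw [Measure.smul_apply]
  rw [Measure.addHaar_image_linearMap, DMap_det]
  rw [Measure.addHaar_closedBall _ _ (Real.sqrt_nonneg _)]
  rw [finrank_euclideanSpace_fin]
  rw [abs_of_pos (inv_pos.2 hc)]
  rw [ENNReal.smul_def, smul_eq_mul]
  rw [show ((cF k : ENNReal) * (ENNReal.ofReal c⁻¹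
      * (ENNReal.ofReal (Real.sqrt (t/c + s^2/(4*c^2)) ^ (k+1))
        * volume (ball (0 : EuclideanSpace ℝ (Fin (k+1))) 1))))
      = ENNReal.ofReal c⁻¹ * ENNReal.ofReal (Real.sqrt (t/c + s^2/(4*c^2)) ^ (k+1))
          * ((cF k : ENNReal) * volume (ball (0 : EuclideanSpace ℝ (Fin (k+1))) 1))
      from by ring]
  rw [← ofReal_kap]
  rw [← ENNReal.ofReal_mul (p := c⁻¹) (inv_nonneg.2 hc.le)]
  rw [← ENNReal.ofReal_mul (p := c⁻¹ * Real.sqrt (t/c + s^2/(4*c^2)) ^ (k+1))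
    (mul_nonneg (inv_nonneg.2 hc.le) (by positivity))]

/-! ### The key identity -/

lemma key (h : 0 < k+2) (ξ : E) (hξ : ‖ξ‖ = 1) (hcge : 0 ≤ ξ (Fin.last (k+1))) (t : ℝ)
    (hpos : 0 < μH[((k:ℝ)+1)] (solidParaboloid (k+2) h ∩ {x : E | (inner ℝ x ξ : ℝ) = t}))
    (hfin : μH[((k:ℝ)+1)] (solidParaboloid (k+2) h ∩ {x : E | (inner ℝ x ξ : ℝ) = t}) < ⊤) :
    4^(k+1) * (ξ (Fin.last (k+1)))^(2*(k+2))
        * ((μH[((k:ℝ)+1)] (solidParaboloid (k+2) h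
            ∩ {x : E | (inner ℝ x ξ : ℝ) = t})).toReal)^2
      = (kap k)^2 * (4*t*(ξ (Fin.last (k+1))) + 1 - (ξ (Fin.last (k+1)))^2)^(k+1) := by
  have hrot := sec_rotate ((k:ℝ)+1) (by positivity) ξ hξ t h
  set c : ℝ := ξ (Fin.last (k+1)) with hcdef
  set s : ℝ := Real.sqrt (1 - c^2) with hsdef
  have hc2 : c^2 ≤ 1 := by
    have h1 : c^2 ≤ ∑ i, ξ i ^2 :=
      Finset.single_le_sum (f := fun i => ξ i ^2) (fun i _ => sq_nonneg _) (Finset.mem_univ _)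
    have h2 : ‖ξ‖^2 = 1 := by rw [hξ]; norm_num
    rw [norm_sq_eq] at h2; linarith
  have hs2 : s^2 = 1 - c^2 := Real.sq_sqrt (by linarith)
  have hsc : s^2 + c^2 = 1 := by linarith
  rw [hrot] at hpos hfin ⊢
  rcases eq_or_lt_of_le hcge with hc0 | hcpos
  · -- vertical case: contradiction with finiteness
    exfalso
    have hseteq : {x : E | (inner ℝ x ((EuclideanSpace.single (0 : Fin (k+2)) s)
        + EuclideanSpace.single (Fin.last (k+1)) c) : ℝ) = t} = {x : E | x 0 = t} := by
      ext x
      rw [Set.mem_setOf_eq, inner_single_pair, Set.mem_setOf_eq, ← hc0]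
      have hs1 : s = 1 := by
        rw [hsdef, ← hc0]
        simp
      rw [hs1]
      constructor <;> intro <;> linarith
    rw [hseteq, vertical_sec_infinite t h] at hfin
    exact (lt_irrefl _ hfin).elim
  · -- slanted case
    set R2 : ℝ := t/c + s^2/(4*c^2) with hR2
    rcases lt_or_ge R2 0 with hRneg | hRpos
    · exfalso
      rw [sec_eq_image s c t hcpos.ne' h, ball_empty s c t hcpos.ne' hRneg,
        Set.image_empty, measure_empty] at hpos
      exact lt_irrefl _ hpos
    · rw [slant_measure s c t hcpos hsc h hRpos]
      rw [ENNReal.toReal_ofReal (mul_nonneg (mul_nonneg (inv_nonneg.2 hcpos.le)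
        (by positivity)) (kap_pos (k := k)).le)]
      have hr2 : Real.sqrt R2 ^2 = R2 := Real.sq_sqrt hRpos
      have hpow : (Real.sqrt R2 ^(k+1))^2 = R2^(k+1) := by
        rw [← pow_mul, mul_comm (k+1) 2, pow_mul, hr2]
      have hstep : (c⁻¹ * Real.sqrt R2 ^ (k+1) * kap k)^2
          = c⁻¹^2 * R2^(k+1) * (kap k)^2 := by
        rw [← hpow]; ring
      rw [hstep]
      have hR2' : R2 = (4*t*c + 1 - c^2)/(4*c^2) := by
        rw [hR2, hs2]
        field_simp
        ring
      rw [hR2', div_pow]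
      have hc2ne : (4*c^2)^(k+1) ≠ 0 := by positivity
      field_simp
      ring
end

end ParaboloidAux

theorem paraboloid_section_function_algebraic
    {n : ℕ} (hn : 2 ≤ n) :
    ∃ (q : MvPolynomial (Fin n) ℝ) (p : Polynomial (MvPolynomial (Fin n) ℝ)),
      q ≠ 0 ∧ p ≠ 0 ∧
      ∀ ξ : EuclideanSpace ℝ (Fin n), ‖ξ‖ = 1 → ∀ t : ℝ,
        0 < secFunE (solidParaboloid n (by omega)) ξ t →
        secFunE (solidParaboloid n (by omega)) ξ t < ⊤ →
        MvPolynomial.eval (fun i => ξ i) q *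
            ((secFunE (solidParaboloid n (by omega)) ξ t).toReal) ^ 2 +
          Polynomial.eval t (Polynomial.map (MvPolynomial.eval fun i => ξ i) p) = 0 := by
  classical
  obtain ⟨k, rfl⟩ : ∃ k, n = k + 2 := ⟨n - 2, by omega⟩
  set N : Fin (k+2) := Fin.last (k+1) with hN
  refine ⟨MvPolynomial.C ((4:ℝ)^(k+1)) * (MvPolynomial.X N)^(2*(k+2)),
    -(Polynomial.C (MvPolynomial.C ((ParaboloidAux.kap k)^2)) *
      (Polynomial.C (MvPolynomial.C (4:ℝ) * MvPolynomial.X N) * Polynomial.X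
        + Polynomial.C (MvPolynomial.C (1:ℝ) - (MvPolynomial.X N)^2))^(k+1)),
    ?_, ?_, ?_⟩
  · -- q ≠ 0
    intro h0
    have := congrArg (MvPolynomial.eval (fun _ : Fin (k+2) => (1:ℝ))) h0
    simp only [MvPolynomial.eval_mul, MvPolynomial.eval_C, MvPolynomial.eval_pow,
      MvPolynomial.eval_X, map_zero, one_pow, mul_one] at this
    have h4 : (0:ℝ) < 4^(k+1) := by positivity
    linarith [this ▸ h4]
  · -- p ≠ 0
    intro h0
    have := congrArg (fun pp : Polynomial (MvPolynomial (Fin (k+2)) ℝ) =>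
      Polynomial.eval (1:ℝ) (pp.map (MvPolynomial.eval (fun _ : Fin (k+2) => (1:ℝ))))) h0
    simp only [Polynomial.map_neg, Polynomial.map_mul, Polynomial.map_pow, Polynomial.map_add,
      Polynomial.map_C, Polynomial.map_X, Polynomial.eval_neg, Polynomial.eval_mul,
      Polynomial.eval_pow, Polynomial.eval_add, Polynomial.eval_C, Polynomial.eval_X,
      Polynomial.map_sub, Polynomial.map_one, Polynomial.eval_sub, Polynomial.eval_one,
      MvPolynomial.eval_mul, MvPolynomial.eval_C, MvPolynomial.eval_X, MvPolynomial.eval_pow,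
      map_sub, map_one, map_zero, one_pow, mul_one, sub_self, add_zero,
      Polynomial.map_zero, Polynomial.eval_zero] at this
    have hk := ParaboloidAux.kap_pos (k := k)
    have h4 : (0:ℝ) < 4^(k+1) := by positivity
    nlinarith [this, mul_pos (pow_pos hk 2) h4]
  · -- the identity
    intro ξ hξ t hpos hfin
    have hexp : (((k+2:ℕ):ℝ) - 1) = (k:ℝ)+1 := by push_cast; ring
    have hsec : ∀ (h' : 0 < k+2),
        secFunE (solidParaboloid (k+2) h') ξ t
          = μH[((k:ℝ)+1)] (solidParaboloid (k+2) h'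
              ∩ {x : EuclideanSpace ℝ (Fin (k+2)) | (inner ℝ x ξ : ℝ) = t}) := by
      intro h'
      rw [secFunE, hexp]
    rw [hsec] at hpos hfin ⊢
    set A : ℝ := (μH[((k:ℝ)+1)] (solidParaboloid (k+2) (by omega)
        ∩ {x : EuclideanSpace ℝ (Fin (k+2)) | (inner ℝ x ξ : ℝ) = t})).toReal with hA
    set c : ℝ := ξ N with hc
    -- evaluate the polynomials
    have hevq : MvPolynomial.eval (fun i => ξ i)
        (MvPolynomial.C ((4:ℝ)^(k+1)) * (MvPolynomial.X N)^(2*(k+2)))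
        = 4^(k+1) * c^(2*(k+2)) := by
      simp [hc]
    have hevp : Polynomial.eval t (Polynomial.map (MvPolynomial.eval fun i => ξ i)
        (-(Polynomial.C (MvPolynomial.C ((ParaboloidAux.kap k)^2)) *
          (Polynomial.C (MvPolynomial.C (4:ℝ) * MvPolynomial.X N) * Polynomial.X
            + Polynomial.C (MvPolynomial.C (1:ℝ) - (MvPolynomial.X N)^2))^(k+1))))
        = -((ParaboloidAux.kap k)^2 * (4*c*t + (1 - c^2))^(k+1)) := by
      simp only [Polynomial.map_neg, Polynomial.map_mul, Polynomial.map_pow, Polynomial.map_add,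
        Polynomial.map_C, Polynomial.map_X, Polynomial.eval_neg, Polynomial.eval_mul,
        Polynomial.eval_pow, Polynomial.eval_add, Polynomial.eval_C, Polynomial.eval_X,
        Polynomial.map_sub, Polynomial.map_one, Polynomial.eval_sub, Polynomial.eval_one,
        MvPolynomial.eval_mul, MvPolynomial.eval_C, MvPolynomial.eval_X, map_sub, map_one,
        MvPolynomial.eval_pow]
      rfl
    rw [hevq, hevp]
    -- establish the key identity
    by_cases hcs : 0 ≤ c
    · have hkey := ParaboloidAux.key (by omega) ξ hξ (hc ▸ hcs) t hpos hfin
      rw [← hc] at hkey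
      rw [← hA] at hkey
      linear_combination hkey
    · push_neg at hcs
      have hneg_set : {x : EuclideanSpace ℝ (Fin (k+2)) | (inner ℝ x (-ξ) : ℝ) = -t}
          = {x : EuclideanSpace ℝ (Fin (k+2)) | (inner ℝ x ξ : ℝ) = t} := by
        ext x
        rw [Set.mem_setOf_eq, Set.mem_setOf_eq, inner_neg_right, neg_inj]
      have hnc : (-ξ) (Fin.last (k+1)) = -c := by
        rw [hc, hN]
        rfl
      have hpos' : 0 < μH[((k:ℝ)+1)] (solidParaboloid (k+2) (by omega)
          ∩ {x : EuclideanSpace ℝ (Fin (k+2)) | (inner ℝ x (-ξ) : ℝ) = -t}) := by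
        rw [hneg_set]; exact hpos
      have hfin' : μH[((k:ℝ)+1)] (solidParaboloid (k+2) (by omega)
          ∩ {x : EuclideanSpace ℝ (Fin (k+2)) | (inner ℝ x (-ξ) : ℝ) = -t}) < ⊤ := by
        rw [hneg_set]; exact hfin
      have hkey := ParaboloidAux.key (by omega) (-ξ) (by rw [norm_neg, hξ])
        (by rw [hnc]; linarith) (-t) hpos' hfin'
      rw [hnc, hneg_set] at hkey
      rw [← hA] at hkey
      have hpow : (-c)^(2*(k+2)) = c^(2*(k+2)) := by
        rw [pow_mul, pow_mul, neg_sq]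
      rw [hpow] at hkey
      have hinner : 4*(-t)*(-c) + 1 - (-c)^2 = 4*t*c + 1 - c^2 := by ring
      rw [hinner] at hkey
      linear_combination hkey
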